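/- Let κ be an infinite well-ordered cardinal (a Cardinal in the well-ordered sense). The following are equivalent: (i) for every sequence X₁, X₂, … of sets (subsets of an arbitrary ambient type) such that the cardinality of Xₙ is strictly less than κ for every n, the union ⋃ₙ Xₙ has cardinality at most κ; (ii) for every metric space Y with the property that for every ε > 0 there exists a subset F ⊆ Y of cardinality strictly less than κ with Y = ⋃_{x ∈ F} B(x, ε), every family of pairwise disjoint nonempty open subsets of Y has cardinality at most κ. -/
import Mathlib

open Cardinal Set Metric

universe u

private lemma one_div_nat_pos (n : ℕ) : (0:ℝ) < 1 / ((n:ℝ) + 1) := by positivity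

open Classical in
/-- distance on the sigma type: distinct points at distance `max 1/(n+1) 1/(m+1)`. -/
noncomputable def sDist {α : Type u} (X : ℕ → Set α) (a b : (n : ℕ) × X n) : ℝ :=
  if a = b then 0 else max (1 / ((a.1:ℝ) + 1)) (1 / ((b.1:ℝ) + 1))

private lemma sDist_nonneg {α : Type u} (X : ℕ → Set α) (a b : (n : ℕ) × X n) :
    0 ≤ sDist X a b := by
  unfold sDist; split
  · exact le_rfl
  · exact le_max_of_le_left (one_div_nat_pos _).le

noncomputable def sigmaMetric {α : Type u} (X : ℕ → Set α) :
    MetricSpace ((n : ℕ) × X n) where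
  dist := sDist X
  dist_self a := by simp [sDist]
  dist_comm a b := by
    show sDist X a b = sDist X b a
    unfold sDist
    by_cases h : a = b
    · simp [h]
    · rw [if_neg h, if_neg (Ne.symm h), max_comm]
  dist_triangle a b c := by
    show sDist X a c ≤ sDist X a b + sDist X b c
    unfold sDist
    by_cases hac : a = c
    · rw [if_pos hac]
      have h1 := sDist_nonneg X a b
      have h2 := sDist_nonneg X b c
      unfold sDist at h1 h2
      linarith
    · rw [if_neg hac]
      by_cases hab : a = b
      · subst hab; rw [if_pos rfl, if_neg hac, zero_add]
      · by_cases hbc : b = c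
        · subst hbc; rw [if_pos rfl, if_neg hab, add_zero]
        · rw [if_neg hab, if_neg hbc]
          have hb := (one_div_nat_pos b.1).le
          apply max_le
          · calc (1 : ℝ) / (a.1 + 1) ≤ max (1 / ((a.1:ℝ) + 1)) (1 / ((b.1:ℝ) + 1)) :=
                le_max_left _ _
              _ ≤ _ := le_add_of_nonneg_right (le_max_of_le_left hb)
          · calc (1 : ℝ) / (c.1 + 1) ≤ max (1 / ((b.1:ℝ) + 1)) (1 / ((c.1:ℝ) + 1)) :=
                le_max_right _ _
              _ ≤ _ := le_add_of_nonneg_left (le_max_of_le_left (one_div_nat_pos _).le)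
  eq_of_dist_eq_zero := by
    intro a b h
    by_contra hne
    replace h : sDist X a b = 0 := h
    unfold sDist at h
    rw [if_neg hne] at h
    have h2 : 1 / ((a.1:ℝ) + 1) ≤ 0 := h ▸ le_max_left _ _
    exact absurd h2 (not_le.2 (one_div_nat_pos a.1))

/-- Theorem 2.2 (t7): for an infinite well-ordered cardinal `κ`, the assertion that
countable unions of sets of size `< κ` have size `≤ κ` is equivalent to the assertion
that every metric space coverable, for each `ε > 0`, by fewer than `κ` open `ε`-balls
satisfies the `κ≤`-chain condition. -/
theorem countable_union_le_iff_metric_chain_condition (κ : Cardinal.{u}) (hκ : ℵ₀ ≤ κ) :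
    (∀ (α : Type u) (X : ℕ → Set α), (∀ n, #(X n) < κ) → #(⋃ n, X n) ≤ κ) ↔
    (∀ (Y : Type u) [MetricSpace Y],
      (∀ ε : ℝ, 0 < ε → ∃ F : Set Y, #F < κ ∧ (⋃ x ∈ F, Metric.ball x ε) = Set.univ) →
      ∀ 𝒞 : Set (Set Y), (∀ U ∈ 𝒞, IsOpen U ∧ U.Nonempty) →
        𝒞.Pairwise Disjoint → #𝒞 ≤ κ) := by
  constructor
  · -- (i) → (ii)
    intro h Y _ hcov 𝒞 h𝒞 hdisj
    classical
    set C : ℕ → Set (Set Y) :=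
      fun n => {U ∈ 𝒞 | ∃ y, ball y (1/((n:ℝ)+1)) ⊆ U} with hC
    have key : ∀ n, #(C n) < κ := by
      intro n
      obtain ⟨F, hFκ, hFcov⟩ := hcov (1/(2*((n:ℝ)+1))) (by positivity)
      have hmem : ∀ U ∈ C n, ∃ x ∈ F, x ∈ U := by
        rintro U ⟨hU𝒞, y, hy⟩
        have hyu : y ∈ ⋃ x ∈ F, ball x (1/(2*((n:ℝ)+1))) := hFcov ▸ mem_univ y
        obtain ⟨x, hxF, hxy⟩ := mem_iUnion₂.1 hyu
        refine ⟨x, hxF, hy ?_⟩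
        rw [mem_ball] at hxy ⊢
        calc dist x y = dist y x := dist_comm _ _
          _ < 1/(2*((n:ℝ)+1)) := hxy
          _ < 1/((n:ℝ)+1) := by
            apply one_div_lt_one_div_of_lt (by positivity)
            nlinarith [Nat.cast_nonneg (α := ℝ) n]
      choose g hgF hgU using hmem
      refine lt_of_le_of_lt (Cardinal.mk_le_of_injective
        (f := fun U : C n => (⟨g U.1 U.2, hgF U.1 U.2⟩ : F)) ?_) hFκ
      intro U V hUV
      have hgeq : g U.1 U.2 = g V.1 V.2 := congrArg Subtype.val hUV
      by_contra hne
      have hne' : (U : Set Y) ≠ V := fun e => hne (Subtype.ext e)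
      exact Set.disjoint_left.mp (hdisj U.2.1 V.2.1 hne')
        (hgU U.1 U.2) (hgeq ▸ hgU V.1 V.2)
    have hcup : 𝒞 = ⋃ n, C n := by
      ext U
      simp only [hC, mem_iUnion, mem_setOf_eq]
      constructor
      · intro hU
        obtain ⟨hop, y, hy⟩ := h𝒞 U hU
        obtain ⟨ε, hε, hball⟩ := Metric.isOpen_iff.1 hop y hy
        obtain ⟨m, hm⟩ := exists_nat_one_div_lt hε
        exact ⟨m, hU, y, (ball_subset_ball hm.le).trans hball⟩
      · rintro ⟨n, hU, -⟩; exact hU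
    rw [hcup]
    exact h (Set Y) C key
  · -- (ii) → (i)
    intro h α X hX
    classical
    set Y := (n : ℕ) × X n with hYdef
    letI : MetricSpace Y := sigmaMetric X
    have hdist : ∀ a b : Y, dist a b = sDist X a b := fun _ _ => rfl
    -- singletons are balls, hence open
    have hsball : ∀ a : Y, ball a (1/((a.1:ℝ)+1)) = {a} := by
      intro a
      ext b
      simp only [mem_ball, mem_singleton_iff, hdist]
      constructor
      · intro hb
        by_contra hne
        rw [sDist, if_neg hne] at hb
        exact absurd hb (not_lt.2 (le_max_of_le_right le_rfl))
      · intro hb; subst hb; rw [sDist, if_pos rfl]; exact one_div_nat_pos _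
    have hopen : ∀ a : Y, IsOpen ({a} : Set Y) := fun a => hsball a ▸ isOpen_ball
    -- levels have small cardinality
    have hlevel : ∀ n, #({a : Y | a.1 = n}) ≤ #(X n) := by
      intro n
      have hfun : ∀ b : {a : Y | a.1 = n}, ((b : Y).2 : α) ∈ X n := by
        rintro ⟨⟨m, x⟩, hm⟩
        simp only [mem_setOf_eq] at hm
        subst hm
        exact x.2
      refine Cardinal.mk_le_of_injective
        (f := fun b : {a : Y | a.1 = n} => (⟨((b : Y).2 : α), hfun b⟩ : X n)) ?_
      rintro ⟨⟨n₁, x₁⟩, h₁⟩ ⟨⟨n₂, x₂⟩, h₂⟩ hb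
      simp only [mem_setOf_eq] at h₁ h₂
      subst h₁; subst h₂
      simp only [Subtype.mk.injEq] at hb
      simp [Subtype.ext hb]
    have hcut : ∀ N : ℕ, #({a : Y | a.1 ≤ N}) < κ := by
      intro N
      induction N with
      | zero =>
        have : {a : Y | a.1 ≤ 0} = {a : Y | a.1 = 0} := by
          ext a; simp [Nat.le_zero]
        rw [this]
        exact lt_of_le_of_lt (hlevel 0) (hX 0)
      | succ N ih =>
        have hsplit : {a : Y | a.1 ≤ N + 1} = {a : Y | a.1 ≤ N} ∪ {a : Y | a.1 = N + 1} := by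
          ext a; simp [Nat.le_add_one_iff]
        rw [hsplit]
        calc #({a : Y | a.1 ≤ N} ∪ {a : Y | a.1 = N + 1} : Set Y)
            ≤ #({a : Y | a.1 ≤ N}) + #({a : Y | a.1 = N + 1}) := Cardinal.mk_union_le _ _
          _ < κ := Cardinal.add_lt_of_lt hκ ih (lt_of_le_of_lt (hlevel _) (hX _))
    -- the ball-cover hypothesis
    have hcov : ∀ ε : ℝ, 0 < ε →
        ∃ F : Set Y, #F < κ ∧ (⋃ x ∈ F, Metric.ball x ε) = Set.univ := by
      intro ε hε
      obtain ⟨N, hN⟩ := exists_nat_one_div_lt hε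
      have hdb : ∀ b : Y, N < b.1 → ∀ a : Y, N < a.1 → dist b a < ε := by
        intro b hb a ha
        rw [hdist, sDist]
        split
        · exact hε
        · refine lt_trans (max_lt ?_ ?_) hN
          · exact one_div_lt_one_div_of_lt (by positivity)
              (by exact_mod_cast Nat.succ_lt_succ hb)
          · exact one_div_lt_one_div_of_lt (by positivity)
              (by exact_mod_cast Nat.succ_lt_succ ha)
      by_cases hEx : ∃ a : Y, N < a.1
      · obtain ⟨a₀, ha₀⟩ := hEx
        refine ⟨{a : Y | a.1 ≤ N} ∪ {a₀}, ?_, ?_⟩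
        · calc #({a : Y | a.1 ≤ N} ∪ {a₀} : Set Y)
              ≤ #({a : Y | a.1 ≤ N}) + #({a₀} : Set Y) := Cardinal.mk_union_le _ _
            _ < κ := Cardinal.add_lt_of_lt hκ (hcut N)
                (by rw [Cardinal.mk_singleton]; exact lt_of_lt_of_le Cardinal.one_lt_aleph0 hκ)
        · apply eq_univ_of_forall
          intro b
          simp only [mem_iUnion, mem_union, mem_singleton_iff, exists_prop]
          by_cases hb : b.1 ≤ N
          · exact ⟨b, Or.inl hb, by simpa [mem_ball] using hε⟩
          · exact ⟨a₀, Or.inr rfl, by rw [mem_ball]; exact hdb b (not_le.1 hb) a₀ ha₀⟩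
      · push_neg at hEx
        refine ⟨{a : Y | a.1 ≤ N}, hcut N, ?_⟩
        apply eq_univ_of_forall
        intro b
        simp only [mem_iUnion, exists_prop]
        exact ⟨b, hEx b, by simpa [mem_ball] using hε⟩
    -- apply the chain condition to the singletons
    have hCD : #(Set.range (fun a : Y => ({a} : Set Y))) ≤ κ := by
      refine h Y hcov _ ?_ ?_
      · rintro U ⟨a, rfl⟩
        exact ⟨hopen a, singleton_nonempty a⟩
      · rintro U ⟨a, rfl⟩ V ⟨b, rfl⟩ hne
        exact Set.disjoint_singleton.2 fun e => hne (by rw [e])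
    have hYκ : #Y ≤ κ := by
      rwa [Cardinal.mk_range_eq _ Set.singleton_injective] at hCD
    -- finally, the union injects into Y
    have hmem : ∀ x : ↥(⋃ n, X n), ∃ n, (x : α) ∈ X n := fun x => mem_iUnion.1 x.2
    choose f hf using hmem
    refine le_trans (Cardinal.mk_le_of_injective
      (f := fun x : ↥(⋃ n, X n) => (⟨f x, ⟨(x : α), hf x⟩⟩ : Y)) ?_) hYκ
    intro x y hxy
    have := congrArg (fun a : Y => (a.2 : α)) hxy
    exact Subtype.ext this
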